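/- (Eigenfunctions of the continuous Hartley transform.) For every n ∈ ℕ with n ≥ 1, each choice of sign ±, and every x ∈ ℝ, (1/√(2π)) ∫_ℝ cas(xy) e^{−y²/2} 𝓗_{±n}(y) dy = (−1)^n e^{−x²/2} 𝓗_{±n}(x); moreover (1/√(2π)) ∫_ℝ cas(xy) e^{−y²/2} dy = e^{−x²/2}. Hence the functions e^{−x²/2} 𝓗_{±n}(x) are eigenfunctions of the Hartley transform with eigenvalue (−1)^n. -/

import Mathlib

/-- The cas function, `cas x = cos x - sin x`. -/
noncomputable def cas (x : ℝ) : ℝ := Real.cos x - Real.sin x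

/-- The physicists' Hermite polynomial, via the Rodrigues formula
`H n x = (-1)^n e^(x²) (dⁿ/dxⁿ) e^(-x²)`. -/
noncomputable def physHermite (n : ℕ) (x : ℝ) : ℝ :=
    (-1 : ℝ) ^ n * Real.exp (x ^ 2) * iteratedDeriv n (fun y : ℝ => Real.exp (-y ^ 2)) x

/-- The supersymmetric Hermite polynomial `𝓗_{εn} = H_{2n} + ε 2√n H_{2n-1}` for `n ≥ 1`
(with sign `ε = ±1`), and `𝓗₀ = 1`. -/
noncomputable def ssHermite (ε : ℝ) (n : ℕ) (x : ℝ) : ℝ :=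
    if n = 0 then 1
    else physHermite (2 * n) x + ε * (2 * Real.sqrt n) * physHermite (2 * n - 1) x

open MeasureTheory Real Complex Polynomial Filter
open scoped FourierTransform

/-- Hermite polynomial sequence. -/
noncomputable def hP : ℕ → Polynomial ℝ
  | 0 => 1
  | (n+1) => Polynomial.C 2 * Polynomial.X * hP n - Polynomial.derivative (hP n)

lemma gauss_hasDerivAt (p : Polynomial ℝ) (x : ℝ) :
    HasDerivAt (fun y : ℝ => p.eval y * Real.exp (-y ^ 2))
      ((Polynomial.derivative p - Polynomial.C 2 * Polynomial.X * p).eval x * Real.exp (-x ^ 2)) x := by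
  have h1 : HasDerivAt (fun y : ℝ => Real.exp (-y ^ 2)) (-(2*x) * Real.exp (-x ^ 2)) x := by
    have : HasDerivAt (fun y : ℝ => -y ^ 2) (-(2*x)) x := by
      simpa using ((hasDerivAt_pow 2 x).fun_neg)
    simpa [mul_comm] using this.exp
  have := (p.hasDerivAt x).fun_mul h1
  refine this.congr_deriv ?_
  simp [Polynomial.eval_mul, Polynomial.eval_sub]
  ring

lemma iteratedDeriv_gauss (n : ℕ) (x : ℝ) :
    iteratedDeriv n (fun y : ℝ => Real.exp (-y ^ 2)) x
      = (-1 : ℝ) ^ n * (hP n).eval x * Real.exp (-x ^ 2) := by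
  induction n generalizing x with
  | zero => simp [hP]
  | succ n ih =>
    rw [iteratedDeriv_succ]
    have : deriv (iteratedDeriv n (fun y : ℝ => Real.exp (-y ^ 2))) x
        = deriv (fun y => (-1 : ℝ) ^ n * ((hP n).eval y * Real.exp (-y ^ 2))) x := by
      apply Filter.EventuallyEq.deriv_eq
      filter_upwards with y using by rw [ih y]; ring
    rw [this, deriv_const_mul _ (gauss_hasDerivAt (hP n) x).differentiableAt,
      (gauss_hasDerivAt (hP n) x).deriv]
    simp [hP]
    ring

lemma physHermite_eq (n : ℕ) (x : ℝ) : physHermite n x = (hP n).eval x := by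
  rw [physHermite, iteratedDeriv_gauss]
  have h1 : (-1:ℝ)^n * (-1:ℝ)^n = 1 := by
    rw [← pow_add]; simp [pow_mul]
  have h2 : Real.exp (x^2) * Real.exp (-x^2) = 1 := by
    rw [← Real.exp_add]; simp
  calc (-1:ℝ) ^ n * Real.exp (x ^ 2) * ((-1) ^ n * (hP n).eval x * Real.exp (-x ^ 2))
      = ((-1:ℝ)^n * (-1:ℝ)^n) * (Real.exp (x^2) * Real.exp (-x^2)) * (hP n).eval x := by ring
    _ = (hP n).eval x := by rw [h1, h2]; ring

/-- complex-valued Hermite-type function -/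
noncomputable def psiC (p : Polynomial ℝ) : ℝ → ℂ :=
  fun y => ((p.eval y * Real.exp (-y ^ 2 / 2) : ℝ) : ℂ)

lemma integrable_poly_gauss (p : Polynomial ℝ) :
    Integrable fun y : ℝ => p.eval y * Real.exp (-y ^ 2 / 2) := by
  have base : ∀ i : ℕ, Integrable fun x : ℝ => x ^ i * Real.exp (-(1/2) * x ^ 2) := by
    intro i
    have h : (-1 : ℝ) < (i : ℝ) :=
      lt_of_lt_of_le (by norm_num) (Nat.cast_nonneg i)
    simpa [Real.rpow_natCast] using
      integrable_rpow_mul_exp_neg_mul_sq (by norm_num : (0:ℝ) < 1/2) h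
  have he : (fun y : ℝ => p.eval y * Real.exp (-y ^ 2 / 2))
      = fun y => ∑ i ∈ Finset.range (p.natDegree + 1),
          p.coeff i * (y ^ i * Real.exp (-(1/2) * y ^ 2)) := by
    ext y
    have harg : -y ^ 2 / 2 = -(1/2) * y ^ 2 := by ring
    rw [harg, Polynomial.eval_eq_sum_range, Finset.sum_mul]
    simp [mul_assoc]
  rw [he]
  exact integrable_finset_sum _ (fun i _ => ((base i).const_mul _))

lemma psi_hasDerivAt (p : Polynomial ℝ) (x : ℝ) :
    HasDerivAt (fun y : ℝ => p.eval y * Real.exp (-y ^ 2 / 2))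
      ((Polynomial.derivative p - Polynomial.X * p).eval x * Real.exp (-x ^ 2 / 2)) x := by
  have h1 : HasDerivAt (fun y : ℝ => Real.exp (-y ^ 2 / 2)) (-x * Real.exp (-x ^ 2 / 2)) x := by
    have h0 : HasDerivAt (fun y : ℝ => -y ^ 2 / 2) (-x) x := by
      have := ((hasDerivAt_pow 2 x).fun_neg).div_const 2
      refine this.congr_deriv ?_
      ring
    simpa [mul_comm] using h0.exp
  have := (p.hasDerivAt x).fun_mul h1
  refine this.congr_deriv ?_
  simp only [Polynomial.eval_sub, Polynomial.eval_mul, Polynomial.eval_X]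
  ring

lemma int_psiC (p : Polynomial ℝ) : Integrable (psiC p) :=
  (integrable_poly_gauss p).ofReal

lemma psiC_hasDerivAt (p : Polynomial ℝ) (x : ℝ) :
    HasDerivAt (psiC p)
      (((Polynomial.derivative p - Polynomial.X * p).eval x * Real.exp (-x ^ 2 / 2) : ℝ) : ℂ) x :=
  (psi_hasDerivAt p x).ofReal_comp

lemma deriv_psiC (p : Polynomial ℝ) :
    deriv (psiC p) = psiC (Polynomial.derivative p - Polynomial.X * p) :=
  funext fun x => (psiC_hasDerivAt p x).deriv

lemma diff_psiC (p : Polynomial ℝ) : Differentiable ℝ (psiC p) :=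
  fun x => (psiC_hasDerivAt p x).differentiableAt

lemma psiC_sub (p q : Polynomial ℝ) (x : ℝ) : psiC (p - q) x = psiC p x - psiC q x := by
  simp [psiC, sub_mul]

lemma psiC_Xmul (p : Polynomial ℝ) (x : ℝ) : psiC (Polynomial.X * p) x = (x : ℂ) * psiC p x := by
  simp [psiC]
  ring

lemma smul_psiC (p : Polynomial ℝ) :
    (fun x : ℝ => x • psiC p x) = psiC (Polynomial.X * p) := by
  ext x
  rw [psiC_Xmul]
  simp [Complex.real_smul]

lemma twist_integrable {f : ℝ → ℂ} (hf : Integrable f) (w : ℝ) :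
    Integrable fun v : ℝ => Complex.exp (((-2 * π * v * w : ℝ) : ℂ) * Complex.I) • f v := by
  simp_rw [smul_eq_mul]
  refine hf.bdd_mul (c := 1) ?_ (Filter.Eventually.of_forall fun v => ?_)
  · exact (Complex.continuous_exp.comp
      ((Complex.continuous_ofReal.comp (by continuity)).mul continuous_const)).aestronglyMeasurable
  · rw [Complex.norm_exp_ofReal_mul_I]

lemma fourier_psiC (k : ℕ) :
    𝓕 (psiC (hP k)) = fun w : ℝ =>
      ((Real.sqrt (2 * π) : ℝ) : ℂ) * (-Complex.I) ^ k * psiC (hP k) (2 * π * w) := by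
  induction k with
  | zero =>
    have hπ : (0:ℝ) < π := Real.pi_pos
    have h2π : (0:ℝ) < 2*π := by positivity
    have hb : (0:ℝ) < (2*π)⁻¹ := by positivity
    have hgauss := fourier_gaussian_pi (b := (((2*π)⁻¹ : ℝ) : ℂ)) (by simpa using hb)
    have hfun : (fun x : ℝ => Complex.exp (-(π:ℂ) * (((2*π)⁻¹ : ℝ) : ℂ) * (x:ℂ) ^ 2))
        = psiC (hP 0) := by
      ext x
      rw [psiC]
      simp only [hP, Polynomial.eval_one, one_mul, Complex.ofReal_exp]
      congr 1
      have hπ' : (π:ℂ) ≠ 0 := Complex.ofReal_ne_zero.mpr Real.pi_ne_zero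
      push_cast
      field_simp
    rw [hfun] at hgauss
    rw [hgauss]
    ext w
    have h1 : (1 : ℂ) / (((2*π)⁻¹ : ℝ) : ℂ) ^ ((1:ℂ)/2) = ((Real.sqrt (2*π) : ℝ) : ℂ) := by
      have h12 : ((1:ℂ)/2) = (((1/2 : ℝ)) : ℂ) := by norm_num
      rw [h12, ← Complex.ofReal_cpow hb.le, Real.inv_rpow h2π.le, ← Real.sqrt_eq_rpow,
        Complex.ofReal_inv]
      simp
    rw [h1]
    have h2 : (-(π:ℂ) / (((2*π)⁻¹ : ℝ) : ℂ) * (w:ℂ) ^ 2)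
        = (((-(2*π*w) ^ 2 / 2 : ℝ)) : ℂ) := by
      have hπ' : (π:ℂ) ≠ 0 := Complex.ofReal_ne_zero.mpr Real.pi_ne_zero
      push_cast
      field_simp
    rw [h2]
    simp only [pow_zero, one_mul, psiC, hP, Polynomial.eval_one, Complex.ofReal_exp]
    ring
  | succ k ih =>
    set p := hP k with hp
    set q := Polynomial.derivative p - Polynomial.X * p with hq
    have intp := int_psiC p
    have intXp := int_psiC (Polynomial.X * p)
    have intq := int_psiC q
    have intsmul : Integrable fun x : ℝ => x • psiC p x := by rw [smul_psiC]; exact intXp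
    have hderiv : deriv (𝓕 (psiC p)) = 𝓕 (fun x : ℝ => (-2 * ↑π * Complex.I * ↑x) • psiC p x) :=
      Real.deriv_fourier intp intsmul
    have hpull : ∀ w : ℝ, 𝓕 (fun x : ℝ => (-2 * ↑π * Complex.I * ↑x) • psiC p x) w
        = (-2 * ↑π * Complex.I) * 𝓕 (psiC (Polynomial.X * p)) w := by
      intro w
      rw [Real.fourier_real_eq_integral_exp_smul,
        Real.fourier_real_eq_integral_exp_smul, ← integral_const_mul]
      congr 1
      ext v
      simp only [psiC_Xmul, smul_eq_mul]
      ring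
    have hasD : ∀ w : ℝ, HasDerivAt (𝓕 (psiC p))
        (((Real.sqrt (2*π) : ℝ) : ℂ) * (-Complex.I)^k * ((2*π) • psiC q (2*π*w))) w := by
      intro w
      have hlin : HasDerivAt (fun w : ℝ => 2*π*w) (2*π) w := by
        simpa using (hasDerivAt_id w).const_mul (2*π)
      have hcomp := HasDerivAt.scomp w (psiC_hasDerivAt p (2*π*w)) hlin
      have h2 := hcomp.const_mul (((Real.sqrt (2*π) : ℝ) : ℂ) * (-Complex.I)^k)
      have heq : (fun w : ℝ => ((Real.sqrt (2*π) : ℝ) : ℂ) * (-Complex.I)^k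
          * psiC p (2*π*w)) = 𝓕 (psiC p) := by rw [ih]
      rw [← heq]
      exact h2
    have hXp : ∀ w : ℝ, 𝓕 (psiC (Polynomial.X * p)) w
        = (-2 * ↑π * Complex.I)⁻¹ *
          (((Real.sqrt (2*π) : ℝ) : ℂ) * (-Complex.I)^k * ((2*π) • psiC q (2*π*w))) := by
      intro w
      have h1 := hpull w
      rw [← hderiv, (hasD w).deriv] at h1
      have hne : (-2 * (π:ℂ) * Complex.I) ≠ 0 := by
        simp [Complex.ofReal_ne_zero.mpr Real.pi_ne_zero, Complex.I_ne_zero]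
      rw [eq_inv_mul_iff_mul_eq₀ hne]
      exact h1.symm
    have hFq : 𝓕 (psiC q) = fun w : ℝ => (2*↑π*Complex.I*↑w) • 𝓕 (psiC p) w := by
      rw [← deriv_psiC]
      exact Real.fourier_deriv intp (diff_psiC p) (by rw [deriv_psiC]; exact intq)
    have hsplit : hP (k+1) = Polynomial.X * p - q := by
      rw [hq, hp]
      show hP (k+1) = _
      rw [hP]
      have h2 : Polynomial.C (2:ℝ) = 2 := map_ofNat Polynomial.C 2
      rw [h2]
      ring
    ext w
    have e1 : 𝓕 (psiC (hP (k+1))) w = 𝓕 (psiC (Polynomial.X * p)) w - 𝓕 (psiC q) w := by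
      rw [Real.fourier_real_eq_integral_exp_smul,
        Real.fourier_real_eq_integral_exp_smul,
        Real.fourier_real_eq_integral_exp_smul,
        ← integral_sub (twist_integrable intXp w) (twist_integrable intq w)]
      congr 1
      ext v
      rw [hsplit, psiC_sub, smul_sub]
    rw [e1, hXp w, hFq, ih]
    have hval : psiC (hP (k+1)) (2*π*w)
        = ((2*π*w : ℝ):ℂ) * psiC p (2*π*w) - psiC q (2*π*w) := by
      rw [hsplit, psiC_sub (Polynomial.X * p) q, psiC_Xmul]
    have hinv : (-2 * (π:ℂ) * Complex.I)⁻¹ = Complex.I / (2*π) := by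
      have hπ' : (π:ℂ) ≠ 0 := Complex.ofReal_ne_zero.mpr Real.pi_ne_zero
      rw [mul_inv, Complex.inv_I]
      field_simp
    rw [hinv, hval, pow_succ]
    have hπ' : (π:ℂ) ≠ 0 := Complex.ofReal_ne_zero.mpr Real.pi_ne_zero
    simp only [Complex.real_smul, smul_eq_mul, Complex.ofReal_mul, Complex.ofReal_ofNat]
    field_simp
    ring

lemma integrable_trig_poly_gauss {g : ℝ → ℝ} (hg : Continuous g) (hb : ∀ t, |g t| ≤ 1)
    (p : Polynomial ℝ) (x : ℝ) :
    Integrable fun y : ℝ => g (x*y) * (p.eval y * Real.exp (-y ^ 2 / 2)) := by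
  refine (integrable_poly_gauss p).bdd_mul (c := 1) ?_ (Filter.Eventually.of_forall fun v => ?_)
  · exact (hg.comp (continuous_const.mul continuous_id)).aestronglyMeasurable
  · simpa using hb (x*v)

lemma plain_integral (k : ℕ) (x : ℝ) :
    ∫ y : ℝ, Complex.exp (((-(x*y) : ℝ) : ℂ) * Complex.I) * psiC (hP k) y
      = ((Real.sqrt (2*π) : ℝ) : ℂ) * (-Complex.I)^k * psiC (hP k) x := by
  have h := congrFun (fourier_psiC k) (x / (2*π))
  rw [Real.fourier_real_eq_integral_exp_smul] at h
  have hπ : π ≠ 0 := Real.pi_ne_zero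
  have harg : 2*π*(x/(2*π)) = x := by field_simp
  rw [harg] at h
  rw [← h]
  congr 1
  ext v
  rw [smul_eq_mul]
  have hsc : (-2*π*v*(x/(2*π)) : ℝ) = -(x*v) := by field_simp
  rw [hsc]

lemma cos_sin_integral (k : ℕ) (x : ℝ) :
    ((∫ y : ℝ, Real.cos (x*y) * ((hP k).eval y * Real.exp (-y^2/2)) : ℝ) : ℂ)
      - Complex.I * ((∫ y : ℝ, Real.sin (x*y) * ((hP k).eval y * Real.exp (-y^2/2)) : ℝ) : ℂ)
    = ((Real.sqrt (2*π) : ℝ) : ℂ) * (-Complex.I)^k * psiC (hP k) x := by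
  rw [← plain_integral k x]
  have hint1 := integrable_trig_poly_gauss Real.continuous_cos (fun t => Real.abs_cos_le_one t) (hP k) x
  have hint2 := integrable_trig_poly_gauss Real.continuous_sin (fun t => Real.abs_sin_le_one t) (hP k) x
  have e1 : ((∫ y : ℝ, Real.cos (x*y) * ((hP k).eval y * Real.exp (-y^2/2)) : ℝ) : ℂ)
      = ∫ y : ℝ, ((Real.cos (x*y) * ((hP k).eval y * Real.exp (-y^2/2)) : ℝ) : ℂ) :=
    (integral_ofReal (f := fun y : ℝ => Real.cos (x*y) * ((hP k).eval y * Real.exp (-y^2/2)))).symm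
  have e2 : ((∫ y : ℝ, Real.sin (x*y) * ((hP k).eval y * Real.exp (-y^2/2)) : ℝ) : ℂ)
      = ∫ y : ℝ, ((Real.sin (x*y) * ((hP k).eval y * Real.exp (-y^2/2)) : ℝ) : ℂ) :=
    (integral_ofReal (f := fun y : ℝ => Real.sin (x*y) * ((hP k).eval y * Real.exp (-y^2/2)))).symm
  have h1' : Integrable (fun y : ℝ => ((Real.cos (x*y) * ((hP k).eval y * Real.exp (-y^2/2)) : ℝ) : ℂ)) :=
    hint1.ofReal
  have h2' : Integrable (fun y : ℝ => Complex.I * ((Real.sin (x*y) * ((hP k).eval y * Real.exp (-y^2/2)) : ℝ) : ℂ)) :=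
    hint2.ofReal.const_mul Complex.I
  have e3 := integral_sub h1' h2'
  rw [e1, e2, ← integral_const_mul, ← e3]
  congr 1
  ext v
  rw [Complex.exp_mul_I, psiC, ← Complex.ofReal_cos, ← Complex.ofReal_sin,
    Real.cos_neg, Real.sin_neg]
  push_cast
  ring

lemma split_re_im {A B C : ℝ} (h : (A:ℂ) - Complex.I * (B:ℂ) = (C:ℂ)) : A = C ∧ B = 0 := by
  have hre := congrArg Complex.re h
  have him := congrArg Complex.im h
  simp at hre him
  exact ⟨hre, him⟩

lemma split_re_im' {A B C : ℝ} (h : (A:ℂ) - Complex.I * (B:ℂ) = -Complex.I * (C:ℂ)) :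
    A = 0 ∧ B = C := by
  have hre := congrArg Complex.re h
  have him := congrArg Complex.im h
  simp at hre him
  exact ⟨hre, by linarith⟩

lemma trig_even (n : ℕ) (x : ℝ) :
    (∫ y : ℝ, Real.cos (x*y) * ((hP (2*n)).eval y * Real.exp (-y^2/2))
      = Real.sqrt (2*π) * ((-1:ℝ)^n * ((hP (2*n)).eval x * Real.exp (-x^2/2)))) ∧
    (∫ y : ℝ, Real.sin (x*y) * ((hP (2*n)).eval y * Real.exp (-y^2/2)) = 0) := by
  have h := cos_sin_integral (2*n) x
  have hpow : (-Complex.I)^(2*n) = (((-1:ℝ)^n : ℝ) : ℂ) := by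
    rw [pow_mul]
    norm_num [Complex.I_sq]
  rw [hpow, psiC] at h
  have hr : ((Real.sqrt (2*π) : ℝ) : ℂ) * (((-1:ℝ)^n : ℝ) : ℂ)
      * (((hP (2*n)).eval x * Real.exp (-x^2/2) : ℝ) : ℂ)
      = ((Real.sqrt (2*π) * ((-1:ℝ)^n * ((hP (2*n)).eval x * Real.exp (-x^2/2))) : ℝ) : ℂ) := by
    push_cast
    ring
  rw [hr] at h
  exact split_re_im h

lemma trig_odd (m : ℕ) (x : ℝ) :
    (∫ y : ℝ, Real.cos (x*y) * ((hP (2*m+1)).eval y * Real.exp (-y^2/2)) = 0) ∧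
    (∫ y : ℝ, Real.sin (x*y) * ((hP (2*m+1)).eval y * Real.exp (-y^2/2))
      = Real.sqrt (2*π) * ((-1:ℝ)^m * ((hP (2*m+1)).eval x * Real.exp (-x^2/2)))) := by
  have h := cos_sin_integral (2*m+1) x
  have hpow : (-Complex.I)^(2*m+1) = (((-1:ℝ)^m : ℝ) : ℂ) * (-Complex.I) := by
    rw [pow_succ, pow_mul]
    norm_num [Complex.I_sq]
  rw [hpow, psiC] at h
  have hr : ((Real.sqrt (2*π) : ℝ) : ℂ) * (((-1:ℝ)^m : ℝ) : ℂ) * (-Complex.I)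
      * (((hP (2*m+1)).eval x * Real.exp (-x^2/2) : ℝ) : ℂ)
      = -Complex.I * ((Real.sqrt (2*π) * ((-1:ℝ)^m * ((hP (2*m+1)).eval x * Real.exp (-x^2/2))) : ℝ) : ℂ) := by
    push_cast
    ring
  rw [mul_assoc, mul_assoc] at h
  rw [show ((Real.sqrt (2*π) : ℝ) : ℂ) * ((((-1:ℝ)^m : ℝ) : ℂ) * (-Complex.I
      * (((hP (2*m+1)).eval x * Real.exp (-x^2/2) : ℝ) : ℂ)))
      = -Complex.I * ((Real.sqrt (2*π) * ((-1:ℝ)^m * ((hP (2*m+1)).eval x * Real.exp (-x^2/2))) : ℝ) : ℂ) from by push_cast; ring] at h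
  exact split_re_im' h

/-- The functions `e^(-x²/2) 𝓗_{εn}(x)` are eigenfunctions of the continuous Hartley
transform with eigenvalue `(-1)^n`:
`(1/√(2π)) ∫ cas(xy) e^(-y²/2) 𝓗_{εn}(y) dy = (-1)^n e^(-x²/2) 𝓗_{εn}(x)`,
and the Gaussian `e^(-x²/2)` is fixed by the Hartley transform. -/
theorem hartley_ssHermite_eigen :
    (∀ n : ℕ, 1 ≤ n → ∀ ε : ℝ, ε = 1 ∨ ε = -1 → ∀ x : ℝ,
      (1 / Real.sqrt (2 * Real.pi)) *
          ∫ y : ℝ, cas (x * y) * (Real.exp (-y ^ 2 / 2) * ssHermite ε n y) =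
        (-1 : ℝ) ^ n * (Real.exp (-x ^ 2 / 2) * ssHermite ε n x)) ∧
    (∀ x : ℝ,
      (1 / Real.sqrt (2 * Real.pi)) * ∫ y : ℝ, cas (x * y) * Real.exp (-y ^ 2 / 2) =
        Real.exp (-x ^ 2 / 2)) := by
  have hs : Real.sqrt (2*π) ≠ 0 := ne_of_gt (Real.sqrt_pos.mpr (by positivity))
  constructor
  · intro n hn ε _ x
    obtain ⟨m, rfl⟩ : ∃ m, n = m + 1 := ⟨n-1, (Nat.succ_pred_eq_of_pos hn).symm⟩
    set c := ε * (2 * Real.sqrt ((m+1 : ℕ) : ℝ)) with hc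
    have h2n1 : 2 * (m+1) - 1 = 2*m+1 := by omega
    have hfun : (fun y : ℝ => cas (x*y) * (Real.exp (-y^2/2) * ssHermite ε (m+1) y))
        = fun y : ℝ =>
          (Real.cos (x*y) * ((hP (2*(m+1))).eval y * Real.exp (-y^2/2))
            + c * (Real.cos (x*y) * ((hP (2*m+1)).eval y * Real.exp (-y^2/2))))
          - (Real.sin (x*y) * ((hP (2*(m+1))).eval y * Real.exp (-y^2/2))
            + c * (Real.sin (x*y) * ((hP (2*m+1)).eval y * Real.exp (-y^2/2)))) := by
      ext y
      rw [cas, ssHermite, if_neg (Nat.succ_ne_zero m), h2n1, physHermite_eq, physHermite_eq]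
      rw [hc]
      ring
    rw [hfun]
    have i1 := integrable_trig_poly_gauss Real.continuous_cos (fun t => Real.abs_cos_le_one t) (hP (2*(m+1))) x
    have i2 := integrable_trig_poly_gauss Real.continuous_cos (fun t => Real.abs_cos_le_one t) (hP (2*m+1)) x
    have i3 := integrable_trig_poly_gauss Real.continuous_sin (fun t => Real.abs_sin_le_one t) (hP (2*(m+1))) x
    have i4 := integrable_trig_poly_gauss Real.continuous_sin (fun t => Real.abs_sin_le_one t) (hP (2*m+1)) x
    have iL : Integrable (fun y : ℝ => Real.cos (x*y) * ((hP (2*(m+1))).eval y * Real.exp (-y^2/2))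
        + c * (Real.cos (x*y) * ((hP (2*m+1)).eval y * Real.exp (-y^2/2)))) := i1.add (i2.const_mul c)
    have iR : Integrable (fun y : ℝ => Real.sin (x*y) * ((hP (2*(m+1))).eval y * Real.exp (-y^2/2))
        + c * (Real.sin (x*y) * ((hP (2*m+1)).eval y * Real.exp (-y^2/2)))) := i3.add (i4.const_mul c)
    rw [integral_sub iL iR,
      integral_add i1 (i2.const_mul c), integral_add i3 (i4.const_mul c),
      integral_const_mul, integral_const_mul,
      (trig_even (m+1) x).1, (trig_even (m+1) x).2, (trig_odd m x).1, (trig_odd m x).2]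
    rw [ssHermite, if_neg (Nat.succ_ne_zero m), h2n1, physHermite_eq, physHermite_eq, hc]
    field_simp
    ring
  · intro x
    have hfun : (fun y : ℝ => cas (x*y) * Real.exp (-y^2/2))
        = fun y : ℝ => Real.cos (x*y) * ((hP (2*0)).eval y * Real.exp (-y^2/2))
            - Real.sin (x*y) * ((hP (2*0)).eval y * Real.exp (-y^2/2)) := by
      ext y
      have h0 : hP (2*0) = 1 := by norm_num [hP]
      rw [cas, h0]
      simp
      ring
    rw [hfun]
    have i1 := integrable_trig_poly_gauss Real.continuous_cos (fun t => Real.abs_cos_le_one t) (hP (2*0)) x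
    have i3 := integrable_trig_poly_gauss Real.continuous_sin (fun t => Real.abs_sin_le_one t) (hP (2*0)) x
    rw [integral_sub i1 i3, (trig_even 0 x).1, (trig_even 0 x).2]
    have h0 : hP (2*0) = 1 := by norm_num [hP]
    rw [h0]
    simp
    field_simp
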